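/- Let n and n_u be even positive integers, and let A ∈ ℝ^{n×n}, B_u ∈ ℝ^{n×n_u}, C ∈ ℝ^{n_u×n} be real matrices. Define S̃ = Θ_n B_u Θ_{n_u} B_uᵀ Θ_n − Θ_n A − Aᵀ Θ_n − Cᵀ Θ_{n_u} C and let r = rank(S̃). Then r is even and there exists a real matrix B_{v2} ∈ ℝ^{n×r} such that, with B_{v1} = Θ_n Cᵀ Θ_{n_u}, the physical realizability equation A Θ_n + Θ_n Aᵀ + B_u Θ_{n_u} B_uᵀ + B_{v1} Θ_{n_u} B_{v1}ᵀ + B_{v2} Θ_r B_{v2}ᵀ = 0 holds. (Theorem 2, sufficiency: the given strictly proper system can be physically realized with exactly r additional quantum noise channels.) -/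

import Mathlib

open Matrix

noncomputable section

/-- The canonical `k × k` block-diagonal skew-symmetric matrix
`Θ_k = diag(J, …, J)` with `J = [[0,1],[-1,0]]` (for `k` even). -/
def ThetaM (k : ℕ) : Matrix (Fin k) (Fin k) ℝ :=
  Matrix.of fun i j =>
    if j.val = i.val + 1 ∧ i.val % 2 = 0 then 1
    else if i.val = j.val + 1 ∧ j.val % 2 = 0 then -1
    else 0

lemma theta_apply (k : ℕ) (i j : Fin k) : ThetaM k i j =
    if j.val = i.val + 1 ∧ i.val % 2 = 0 then 1
    else if i.val = j.val + 1 ∧ j.val % 2 = 0 then -1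
    else 0 := rfl

lemma theta_transpose (k : ℕ) : (ThetaM k)ᵀ = -ThetaM k := by
  ext i j
  simp only [transpose_apply, theta_apply, Matrix.neg_apply]
  split_ifs <;> (try simp only [true_and, not_true, true_iff] at *) <;> first | (exfalso; omega) | norm_num

lemma theta_mul_theta (k : ℕ) (hk : Even k) : ThetaM k * ThetaM k = -1 := by
  ext i l
  rw [mul_apply]
  have hk2 : k % 2 = 0 := Nat.even_iff.mp hk
  rcases Nat.even_or_odd i.val with hi | hi
  · have hi2 : (i : ℕ) % 2 = 0 := Nat.even_iff.mp hi
    have hi1 : (i : ℕ) + 1 < k := by have := i.isLt; omega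
    rw [Finset.sum_eq_single_of_mem (⟨i.val + 1, hi1⟩ : Fin k) (Finset.mem_univ _)
      (fun j _ hj => by
        have hv : (j : ℕ) ≠ (i : ℕ) + 1 := by
          simpa [Fin.ext_iff] using hj
        show ThetaM k i j * ThetaM k j l = 0
        rw [theta_apply]
        split_ifs <;> first | (exfalso; omega) | ring)]
    show ThetaM k i _ * ThetaM k _ l = _
    simp only [theta_apply, Matrix.neg_apply, Matrix.one_apply, Fin.ext_iff]
    split_ifs <;> (try simp only [true_and, not_true, true_iff] at *) <;> first | (exfalso; omega) | norm_num
  · have hi2 : (i : ℕ) % 2 = 1 := Nat.odd_iff.mp hi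
    have hi0 : (i : ℕ) - 1 < k := by have := i.isLt; omega
    rw [Finset.sum_eq_single_of_mem (⟨i.val - 1, hi0⟩ : Fin k) (Finset.mem_univ _)
      (fun j _ hj => by
        have hv : (j : ℕ) ≠ (i : ℕ) - 1 := by
          simpa [Fin.ext_iff] using hj
        show ThetaM k i j * ThetaM k j l = 0
        rw [theta_apply]
        split_ifs <;> first | (exfalso; omega) | ring)]
    show ThetaM k i _ * ThetaM k _ l = _
    simp only [theta_apply, Matrix.neg_apply, Matrix.one_apply, Fin.ext_iff]
    split_ifs <;> (try simp only [true_and, not_true, true_iff] at *) <;> first | (exfalso; omega) | norm_num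
lemma quad_apply {n r : ℕ} (X : Matrix (Fin n) (Fin r) ℝ) (a b : Fin n) :
    (X * ThetaM r * Xᵀ) a b = ∑ j, ∑ k, X a j * ThetaM r j k * X b k := by
  simp only [mul_apply, transpose_apply, Finset.sum_mul]
  rw [Finset.sum_comm]

lemma theta_append (m : ℕ) (hm : Even m) {nn : ℕ} (B' : Matrix (Fin nn) (Fin m) ℝ)
    (q p : Fin nn → ℝ) :
    (Matrix.of fun i => Fin.append (B' i) ![q i, p i]) * ThetaM (m + 2) *
      (Matrix.of fun i => Fin.append (B' i) ![q i, p i])ᵀ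
    = B' * ThetaM m * B'ᵀ + (vecMulVec q p - vecMulVec p q) := by
  have hm2 : m % 2 = 0 := Nat.even_iff.mp hm
  ext a b
  rw [quad_apply]
  set B : Matrix (Fin nn) (Fin (m + 2)) ℝ := Matrix.of fun i => Fin.append (B' i) ![q i, p i] with hB
  have hBl : ∀ (i : Fin nn) (j : Fin m), B i (Fin.castAdd 2 j) = B' i j := by
    intro i j; simp [hB, Fin.append_left]
  have hBr : ∀ (i : Fin nn) (k : Fin 2), B i (Fin.natAdd m k) = ![q i, p i] k := by
    intro i k; simp [hB, Fin.append_right]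
  have tcc : ∀ (j k : Fin m), ThetaM (m+2) (Fin.castAdd 2 j) (Fin.castAdd 2 k) = ThetaM m j k := by
    intro j k; simp [theta_apply]
  have tcn : ∀ (j : Fin m) (k : Fin 2), ThetaM (m+2) (Fin.castAdd 2 j) (Fin.natAdd m k) = 0 := by
    intro j k
    have := j.isLt; have := k.isLt
    simp only [theta_apply, Fin.coe_castAdd, Fin.coe_natAdd]
    split_ifs <;> first | (exfalso; omega) | rfl
  have tnc : ∀ (j : Fin 2) (k : Fin m), ThetaM (m+2) (Fin.natAdd m j) (Fin.castAdd 2 k) = 0 := by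
    intro j k
    have := j.isLt; have := k.isLt
    simp only [theta_apply, Fin.coe_castAdd, Fin.coe_natAdd]
    split_ifs <;> first | (exfalso; omega) | rfl
  have tnn : ∀ (j k : Fin 2), ThetaM (m+2) (Fin.natAdd m j) (Fin.natAdd m k) = ThetaM 2 j k := by
    intro j k
    have := j.isLt; have := k.isLt
    simp only [theta_apply, Fin.coe_natAdd]
    split_ifs <;> first | (exfalso; omega) | rfl
  rw [Fin.sum_univ_add]
  have e1 : ∀ j : Fin m, (∑ k, B a (Fin.castAdd 2 j) * ThetaM (m+2) (Fin.castAdd 2 j) k * B b k)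
      = ∑ k : Fin m, B' a j * ThetaM m j k * B' b k := by
    intro j
    rw [Fin.sum_univ_add]
    have : (∑ k : Fin 2, B a (Fin.castAdd 2 j) * ThetaM (m+2) (Fin.castAdd 2 j) (Fin.natAdd m k) * B b (Fin.natAdd m k)) = 0 := by
      apply Finset.sum_eq_zero; intro k _; rw [tcn]; ring
    rw [this, add_zero]
    congr 1; ext k
    rw [hBl, hBl, tcc]
  have e2 : ∀ j : Fin 2, (∑ k, B a (Fin.natAdd m j) * ThetaM (m+2) (Fin.natAdd m j) k * B b k)
      = ∑ k : Fin 2, ![q a, p a] j * ThetaM 2 j k * ![q b, p b] k := by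
    intro j
    rw [Fin.sum_univ_add]
    have : (∑ k : Fin m, B a (Fin.natAdd m j) * ThetaM (m+2) (Fin.natAdd m j) (Fin.castAdd 2 k) * B b (Fin.castAdd 2 k)) = 0 := by
      apply Finset.sum_eq_zero; intro k _; rw [tnc]; ring
    rw [this, zero_add]
    congr 1; ext k
    rw [hBr, hBr, tnn]
  rw [Finset.sum_congr rfl (fun j _ => e1 j), Finset.sum_congr rfl (fun j _ => e2 j)]
  rw [← quad_apply]
  simp only [Matrix.add_apply, Matrix.sub_apply, vecMulVec_apply]
  congr 1
  simp only [Fin.sum_univ_two]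
  have t01 : ThetaM 2 0 1 = 1 := by simp [theta_apply]
  have t10 : ThetaM 2 1 0 = -1 := by simp [theta_apply]
  have t00 : ThetaM 2 0 0 = 0 := by simp [theta_apply]
  have t11 : ThetaM 2 1 1 = 0 := by simp [theta_apply]
  simp only [t01, t10, t00, t11]
  simp [Matrix.cons_val_zero, Matrix.cons_val_one]
  ring
lemma skew_decomp (k : ℕ) : ∀ (nn : ℕ) (M : Matrix (Fin nn) (Fin nn) ℝ),
    Mᵀ = -M → M.rank = k →
    Even k ∧ ∃ B : Matrix (Fin nn) (Fin k) ℝ, M = B * ThetaM k * Bᵀ := by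
  induction k using Nat.strong_induction_on with
  | _ k IH =>
  intro nn M hskew hrk
  by_cases hM : M = 0
  · subst hM
    rw [Matrix.rank_zero] at hrk
    subst hrk
    exact ⟨Even.zero, 0, by simp⟩
  · obtain ⟨i, j, hij⟩ : ∃ i j, M i j ≠ 0 := by
      by_contra h; push_neg at h; exact hM (by ext a b; simpa using h a b)
    have hMsym : ∀ a b, M b a = -M a b := fun a b => by
      have := congrFun (congrFun hskew a) b
      simpa [Matrix.transpose_apply] using this
    have hMd : ∀ a, M a a = 0 := fun a => by
      have := hMsym a a; linarith
    set c := M i j with hc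
    set p : Fin nn → ℝ := fun a => c⁻¹ * M a j with hp
    set q : Fin nn → ℝ := fun a => M a i with hq
    set M' := M + vecMulVec p q - vecMulVec q p with hM'
    have hpi : p i = 1 := by simp [hp, ← hc, inv_mul_cancel₀ hij]
    have hqi : q i = 0 := by simp [hq, hMd]
    have hpj : p j = 0 := by simp [hp, hMd]
    have hqj : q j = -c := by simp [hq, hMsym i j, ← hc]
    have hskew' : M'ᵀ = -M' := by
      ext a b
      simp only [hM', Matrix.transpose_apply, Matrix.sub_apply, Matrix.add_apply,
        Matrix.neg_apply, vecMulVec_apply]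
      rw [hMsym a b]
      ring
    have hM'v : ∀ z : Fin nn → ℝ, M' *ᵥ z =
        M *ᵥ z + (∑ b, q b * z b) • p - (∑ b, p b * z b) • q := by
      intro z
      funext a
      simp only [hM', Pi.add_apply, Pi.sub_apply,
        Pi.smul_apply, smul_eq_mul, Matrix.mulVec, dotProduct]
      simp only [Matrix.sub_apply, Matrix.add_apply, vecMulVec_apply, sub_mul, add_mul,
        Finset.sum_sub_distrib, Finset.sum_add_distrib]
      congr 1
      · congr 1
        rw [Finset.sum_mul]
        exact Finset.sum_congr rfl fun b _ => by ring
      · rw [Finset.sum_mul]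
        exact Finset.sum_congr rfl fun b _ => by ring
    have hqz : ∀ z : Fin nn → ℝ, M *ᵥ z = 0 → (∑ b, q b * z b) = 0 := by
      intro z hz
      calc ∑ b, q b * z b = ∑ b, -(M i b * z b) := by
            refine Finset.sum_congr rfl fun b _ => ?_
            simp only [hq]
            rw [hMsym i b]; ring
        _ = -((M *ᵥ z) i) := by
            rw [Matrix.mulVec, dotProduct, ← Finset.sum_neg_distrib]
        _ = 0 := by rw [hz]; simp
    have hpz : ∀ z : Fin nn → ℝ, M *ᵥ z = 0 → (∑ b, p b * z b) = 0 := by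
      intro z hz
      calc ∑ b, p b * z b = ∑ b, c⁻¹ * -(M j b * z b) := by
            refine Finset.sum_congr rfl fun b _ => ?_
            simp only [hp]
            rw [hMsym j b]; ring
        _ = c⁻¹ * -((M *ᵥ z) j) := by
            rw [Matrix.mulVec, dotProduct, ← Finset.sum_neg_distrib, Finset.mul_sum]
        _ = 0 := by rw [hz]; simp
    have hker : ∀ z : Fin nn → ℝ, M *ᵥ z = 0 → M' *ᵥ z = 0 := by
      intro z hz
      rw [hM'v, hz, hqz z hz, hpz z hz]
      simp
    have hsq : ∀ (w : Fin nn → ℝ) (a : Fin nn),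
        (∑ b, w b * (Pi.single a 1 : Fin nn → ℝ) b) = w a := by
      intro w a
      simp [Pi.single_apply]
    have hMx : M *ᵥ Pi.single i 1 = q := by
      funext a; simp [hq]
    have hMy : M *ᵥ Pi.single j 1 = fun a => M a j := by
      funext a; simp
    have hM'x : M' *ᵥ Pi.single i 1 = 0 := by
      rw [hM'v, hMx, hsq, hsq, hqi, hpi]
      simp
    have hM'y : M' *ᵥ Pi.single j 1 = 0 := by
      rw [hM'v, hMy, hsq, hsq, hqj, hpj]
      funext a
      simp only [Pi.add_apply, Pi.sub_apply, Pi.smul_apply, smul_eq_mul, Pi.zero_apply,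
        zero_mul, sub_zero]
      simp only [hp]
      field_simp
      ring
    -- kernels
    set K := LinearMap.ker M.mulVecLin with hK
    set K' := LinearMap.ker M'.mulVecLin with hK'
    have memK : ∀ z, z ∈ K ↔ M *ᵥ z = 0 := fun z => by
      rw [hK, LinearMap.mem_ker, Matrix.mulVecLin_apply]
    have memK' : ∀ z, z ∈ K' ↔ M' *ᵥ z = 0 := fun z => by
      rw [hK', LinearMap.mem_ker, Matrix.mulVecLin_apply]
    have hKK' : K ≤ K' := fun z hz => (memK' z).mpr (hker z ((memK z).mp hz))
    have hxK : Pi.single i 1 ∉ K := by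
      rw [memK, hMx]
      intro h
      exact hij (by simpa [hqj, neg_eq_zero, hc] using congrFun h j)
    set K1 := K ⊔ Submodule.span ℝ {Pi.single i (1:ℝ)} with hK1
    have hxK1 : Pi.single i (1:ℝ) ∈ K1 :=
      le_sup_right (α := Submodule ℝ (Fin nn → ℝ)) (Submodule.mem_span_singleton_self _)
    have h1 : K < K1 := lt_of_le_of_ne le_sup_left (fun h => hxK (h ▸ hxK1))
    have hyK1 : Pi.single j (1:ℝ) ∉ K1 := by
      intro hy
      rw [hK1, Submodule.mem_sup] at hy
      obtain ⟨z, hz, w, hw, hzw⟩ := hy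
      rw [Submodule.mem_span_singleton] at hw
      obtain ⟨a, rfl⟩ := hw
      have hMyi : (M *ᵥ (Pi.single j 1 : Fin nn → ℝ)) i = c := by rw [hMy]
      have := congrArg (fun v => (M *ᵥ v) i) hzw
      simp only [Matrix.mulVec_add, Matrix.mulVec_smul, Pi.add_apply, Pi.smul_apply,
        (memK z).mp hz, Pi.zero_apply, zero_add, smul_eq_mul, hMx, hMyi, hqi, mul_zero] at this
      exact hij this.symm
    set K2 := K1 ⊔ Submodule.span ℝ {Pi.single j (1:ℝ)} with hK2
    have hyK2 : Pi.single j (1:ℝ) ∈ K2 :=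
      le_sup_right (α := Submodule ℝ (Fin nn → ℝ)) (Submodule.mem_span_singleton_self _)
    have h2 : K1 < K2 := lt_of_le_of_ne le_sup_left (fun h => hyK1 (h ▸ hyK2))
    have hK2K' : K2 ≤ K' := by
      rw [hK2, hK1]
      refine sup_le (sup_le hKK' ?_) ?_
      · rw [Submodule.span_singleton_le_iff_mem, memK']
        exact hM'x
      · rw [Submodule.span_singleton_le_iff_mem, memK']
        exact hM'y
    have hfr1 : Module.finrank ℝ K < Module.finrank ℝ K1 :=
      Submodule.finrank_lt_finrank_of_lt h1
    have hfr2 : Module.finrank ℝ K1 < Module.finrank ℝ K2 :=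
      Submodule.finrank_lt_finrank_of_lt h2
    have hfr3 : Module.finrank ℝ K2 ≤ Module.finrank ℝ K' :=
      Submodule.finrank_mono hK2K'
    have hdim : Module.finrank ℝ (Fin nn → ℝ) = nn := by
      simp [Module.finrank_pi]
    have rn : M.rank + Module.finrank ℝ K = Module.finrank ℝ (Fin nn → ℝ) := by
      rw [Matrix.rank, hK]
      exact LinearMap.finrank_range_add_finrank_ker M.mulVecLin
    have rn' : M'.rank + Module.finrank ℝ K' = Module.finrank ℝ (Fin nn → ℝ) := by
      rw [Matrix.rank, hK']
      exact LinearMap.finrank_range_add_finrank_ker M'.mulVecLin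
    have hrklt : M'.rank + 2 ≤ k := by omega
    obtain ⟨hEk', B', hB'⟩ := IH M'.rank (by omega) nn M' hskew' rfl
    set B : Matrix (Fin nn) (Fin (M'.rank + 2)) ℝ :=
      Matrix.of (fun a => Fin.append (B' a) ![q a, p a]) with hB
    have hBM : B * ThetaM (M'.rank + 2) * Bᵀ = M := by
      rw [hB, theta_append M'.rank hEk' B' q p, ← hB']
      rw [hM']
      ext a b
      simp only [Matrix.add_apply, Matrix.sub_apply]
      ring
    have hrkle : k ≤ M'.rank + 2 := by
      rw [← hrk, ← hBM]
      calc ((B * ThetaM (M'.rank + 2)) * Bᵀ).rank ≤ Bᵀ.rank :=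
            Matrix.rank_mul_le_right _ _
        _ ≤ M'.rank + 2 := Matrix.rank_le_height _
    obtain rfl : k = M'.rank + 2 := by omega
    exact ⟨hEk'.add even_two, B, hBM.symm⟩
lemma theta_cancel {k m : ℕ} (hk : Even k) (X : Matrix (Fin k) (Fin m) ℝ) :
    ThetaM k * (ThetaM k * X) = -X := by
  rw [← Matrix.mul_assoc, theta_mul_theta k hk, Matrix.neg_mul, Matrix.one_mul]


/-- **Theorem 2 (sufficiency).** If `S̃ = Θ Bu Θ_{nu} Buᵀ Θ − Θ A − Aᵀ Θ − Cᵀ Θ_{nu} C`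
and `r = rank S̃`, then `r` is even and there is `B_{v2} ∈ ℝ^{n × r}` such that, with
`B_{v1} = Θ Cᵀ Θ_{nu}`, the physical realizability equation holds. -/
theorem physically_realizable_with_rank_S_additional_noises
    (n nu : ℕ) (hn : 0 < n) (hne : Even n) (hnu : 0 < nu) (hnue : Even nu)
    (A : Matrix (Fin n) (Fin n) ℝ) (Bu : Matrix (Fin n) (Fin nu) ℝ)
    (C : Matrix (Fin nu) (Fin n) ℝ)
    (S : Matrix (Fin n) (Fin n) ℝ)
    (hS : S = ThetaM n * Bu * ThetaM nu * Buᵀ * ThetaM n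
              - ThetaM n * A - Aᵀ * ThetaM n - Cᵀ * ThetaM nu * C) :
    Even S.rank ∧
    ∃ Bv2 : Matrix (Fin n) (Fin S.rank) ℝ,
      A * ThetaM n + ThetaM n * Aᵀ + Bu * ThetaM nu * Buᵀ +
        (ThetaM n * Cᵀ * ThetaM nu) * ThetaM nu * (ThetaM n * Cᵀ * ThetaM nu)ᵀ +
        Bv2 * ThetaM S.rank * Bv2ᵀ = 0 := by
  have hskewS : Sᵀ = -S := by
    rw [hS]
    simp only [Matrix.transpose_sub, Matrix.transpose_mul, Matrix.transpose_transpose,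
      theta_transpose]
    simp only [Matrix.neg_mul, Matrix.mul_neg, neg_neg]
    simp only [Matrix.mul_assoc]
    abel
  obtain ⟨hEven, B, hB⟩ := skew_decomp S.rank n S hskewS rfl
  refine ⟨hEven, ThetaM n * B, ?_⟩
  have key : ∀ (r : ℕ) (B : Matrix (Fin n) (Fin r) ℝ),
      (ThetaM n * B) * ThetaM r * (ThetaM n * B)ᵀ
      = -(ThetaM n * (B * ThetaM r * Bᵀ) * ThetaM n) := by
    intro r B
    simp only [Matrix.transpose_mul, theta_transpose, Matrix.mul_neg, Matrix.neg_mul,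
      Matrix.mul_assoc]
  have main : A * ThetaM n + ThetaM n * Aᵀ + Bu * ThetaM nu * Buᵀ +
      (ThetaM n * Cᵀ * ThetaM nu) * ThetaM nu * (ThetaM n * Cᵀ * ThetaM nu)ᵀ
      = ThetaM n * S * ThetaM n := by
    rw [hS]
    simp only [Matrix.transpose_mul, Matrix.transpose_transpose, theta_transpose]
    simp only [Matrix.sub_mul, Matrix.mul_sub, Matrix.neg_mul, Matrix.mul_neg,
      Matrix.mul_assoc]
    simp only [theta_mul_theta n hne, theta_mul_theta nu hnue,
      theta_cancel hne, theta_cancel hnue, Matrix.mul_neg, Matrix.mul_one,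
      Matrix.neg_mul, neg_neg, Matrix.mul_assoc]
    abel
  rw [key S.rank B, ← hB, main, add_neg_cancel]
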